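/- Let A be a Noetherian commutative ring, 𝒫 a prime ideal of A, and 0 → K → M → N → 0 a short exact sequence of finitely generated A-modules such that K ⊗_A A_𝒫 has finite length as an A_𝒫-module. Then the induced sequence 0 → K ⊗ A_𝒫 → Λ(M ⊗ A_𝒫) → Λ(N ⊗ A_𝒫) → 0 is exact, and consequently ℓ_{A_𝒫}(Λ(M ⊗ A_𝒫)) = ℓ_{A_𝒫}(Λ(N ⊗ A_𝒫)) + ℓ_{A_𝒫}(K ⊗ A_𝒫). -/

import Mathlib

open scoped Classical

universe u

/-- The ordinal-valued (Krull) length of a module: the rank of `⊥` in the well-founded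
relation `>` on submodules (so `olength M = sup {olength N + 1 | N proper quotient of M}`);
defined to be `0` when the relation is not accessible at `⊥`. -/
noncomputable def olength (A : Type u) [CommRing A] (M : Type*) [AddCommGroup M]
    [Module A M] : Ordinal :=
  if h : Acc (α := Submodule A M) (· > ·) ⊥ then h.rank else 0

theorem acc_rank_le_of_map {α β : Type u} {r : α → α → Prop} {s : β → β → Prop}
    (p : α → Prop) (hp : ∀ ⦃x y⦄, p x → r y x → p y) (T : α → β)
    (hT : ∀ ⦃x y⦄, p x → r y x → s (T y) (T x)) :
    ∀ {a : α} (ha : Acc r a), p a → ∀ (hb : Acc s (T a)), ha.rank ≤ hb.rank := by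
  intro a ha
  induction ha with
  | intro a hacc ih =>
    intro pa hb
    rw [Acc.rank_eq]
    refine Ordinal.iSup_le ?_
    rintro ⟨y, hy⟩
    have hs : s (T y) (T a) := hT pa hy
    have h1 : ((Acc.intro a hacc).inv hy).rank ≤ (hb.inv hs).rank := ih y hy (hp pa hy) _
    exact le_trans (Order.succ_le_succ h1) (Order.succ_le_of_lt (Acc.rank_lt_of_rel hb hs))

variable {R : Type u} [CommRing R]

theorem rank_le_of_map {X Y : Type u} [AddCommGroup X] [Module R X] [AddCommGroup Y] [Module R Y]
    [IsNoetherian R X] [IsNoetherian R Y]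
    (p : Submodule R X → Prop) (hp : ∀ ⦃x y : Submodule R X⦄, p x → y > x → p y)
    (T : Submodule R X → Submodule R Y)
    (hT : ∀ ⦃x y : Submodule R X⦄, p x → y > x → T y > T x) {a : Submodule R X} (pa : p a) :
    IsWellFounded.rank (α := Submodule R X) (· > ·) a
      ≤ IsWellFounded.rank (α := Submodule R Y) (· > ·) (T a) :=
  acc_rank_le_of_map p hp T hT (IsWellFounded.apply _ a) pa (IsWellFounded.apply _ (T a))

theorem olength_eq_rank_bot {X : Type u} [AddCommGroup X] [Module R X] [IsNoetherian R X] :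
    olength R X = IsWellFounded.rank (α := Submodule R X) (· > ·) ⊥ := by
  have h : Acc (α := Submodule R X) (· > ·) ⊥ := IsWellFounded.apply _ ⊥
  rw [olength, dif_pos h]
  rfl

theorem olength_congr {X Y : Type u} [AddCommGroup X] [Module R X] [AddCommGroup Y] [Module R Y]
    [IsNoetherian R X] (e : X ≃ₗ[R] Y) : olength R X = olength R Y := by
  have hY : IsNoetherian R Y := isNoetherian_of_linearEquiv e
  rw [olength_eq_rank_bot, olength_eq_rank_bot]
  have key : ∀ {W Z : Type u} [AddCommGroup W] [Module R W] [AddCommGroup Z] [Module R Z],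
      ∀ [IsNoetherian R W] [IsNoetherian R Z] (f : W ≃ₗ[R] Z),
      IsWellFounded.rank (α := Submodule R W) (· > ·) ⊥
        ≤ IsWellFounded.rank (α := Submodule R Z) (· > ·) ⊥ := by
    intro W Z _ _ _ _ _ _ f
    have h := rank_le_of_map (R := R) (fun _ => True) (fun _ _ _ _ => trivial)
      (fun N => N.map (f : W →ₗ[R] Z))
      (fun x y _ hxy => by
        beta_reduce
        refine lt_of_le_of_ne (Submodule.map_mono hxy.le) fun he => ?_
        exact hxy.ne (Submodule.map_injective_of_injective f.injective he))
      (a := ⊥) trivial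
    beta_reduce at h
    rwa [Submodule.map_bot] at h
  exact le_antisymm (key e) (key e.symm)

theorem rank_eq_olength_quotient {X : Type u} [AddCommGroup X] [Module R X] [IsNoetherian R X]
    (K : Submodule R X) :
    IsWellFounded.rank (α := Submodule R X) (· > ·) K = olength R (X ⧸ K) := by
  rw [olength_eq_rank_bot]
  apply le_antisymm
  · have h := rank_le_of_map (R := R) (fun N => K ≤ N) (fun x y hx hxy => le_trans hx hxy.le)
      (fun N => N.map K.mkQ)
      (fun x y hx hxy => by
        beta_reduce
        refine lt_of_le_of_ne (Submodule.map_mono hxy.le) fun he => ?_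
        have h1 : Submodule.comap K.mkQ (Submodule.map K.mkQ x)
            = Submodule.comap K.mkQ (Submodule.map K.mkQ y) := by rw [he]
        rw [Submodule.comap_map_eq, Submodule.comap_map_eq, Submodule.ker_mkQ,
          sup_eq_left.mpr hx, sup_eq_left.mpr (le_trans hx hxy.le)] at h1
        exact hxy.ne h1) (a := K) le_rfl
    have hbot : Submodule.map K.mkQ K = ⊥ := by
      refine le_bot_iff.mp (Submodule.map_le_iff_le_comap.mpr ?_)
      rw [Submodule.comap_bot, Submodule.ker_mkQ]
    beta_reduce at h
    rwa [hbot] at h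
  · have h := rank_le_of_map (R := R) (fun _ => True) (fun _ _ _ _ => trivial)
      (fun Q : Submodule R (X ⧸ K) => Q.comap K.mkQ)
      (fun x y _ hxy => by
        beta_reduce
        refine lt_of_le_of_ne (Submodule.comap_mono hxy.le) fun he => ?_
        have h1 : Submodule.map K.mkQ (Submodule.comap K.mkQ x)
            = Submodule.map K.mkQ (Submodule.comap K.mkQ y) := by rw [he]
        rw [Submodule.map_comap_eq_of_surjective (Submodule.mkQ_surjective K),
          Submodule.map_comap_eq_of_surjective (Submodule.mkQ_surjective K)] at h1
        exact hxy.ne h1) (a := ⊥) trivial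
    beta_reduce at h
    rwa [Submodule.comap_bot, Submodule.ker_mkQ] at h

theorem rank_of_covBy {X : Type u} [AddCommGroup X] [Module R X] [IsNoetherian R X] :
    ∀ (N' N : Submodule R X), N ⋖ N' →
      IsWellFounded.rank (α := Submodule R X) (· > ·) N
        = IsWellFounded.rank (α := Submodule R X) (· > ·) N' + 1 := by
  have wf : WellFounded ((· > ·) : Submodule R X → Submodule R X → Prop) := IsWellFounded.wf
  intro N'
  refine wf.induction (C := fun N' => ∀ N : Submodule R X, N ⋖ N' →
    IsWellFounded.rank (α := Submodule R X) (· > ·) N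
      = IsWellFounded.rank (α := Submodule R X) (· > ·) N' + 1) N' ?_
  intro N' IH N hcov
  have hlt : N < N' := hcov.lt
  apply le_antisymm
  · have hre := IsWellFounded.rank_eq ((· > ·) : Submodule R X → Submodule R X → Prop) N
    rw [hre]
    refine Ordinal.iSup_le ?_
    rintro ⟨M, hM⟩
    rw [Ordinal.add_one_eq_succ]
    refine Order.succ_le_succ ?_
    show IsWellFounded.rank (α := Submodule R X) (· > ·) M
      ≤ IsWellFounded.rank (α := Submodule R X) (· > ·) N'
    by_cases hle : N' ≤ M
    · rcases hle.lt_or_eq with h | h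
      · exact (IsWellFounded.rank_lt_of_rel (show M > N' from h)).le
      · exact le_of_eq (by rw [h])
    · have h1 : N ≤ M ⊓ N' := le_inf (le_of_lt hM) hcov.lt.le
      have h2 : ¬ (N < M ⊓ N') := fun h =>
        hcov.2 h (lt_of_le_of_ne inf_le_right fun he => hle (he ▸ inf_le_left))
      have hinf : M ⊓ N' = N := (h1.lt_or_eq.resolve_left h2).symm
      have hcov2 : M ⊓ N' ⋖ N' := by rw [hinf]; exact hcov
      have hcov3 : M ⋖ M ⊔ N' := covBy_sup_of_inf_covBy_right hcov2
      have hgt : M ⊔ N' > N' := by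
        refine lt_of_le_of_ne le_sup_right fun he => ?_
        have hM' : M ≤ N' := by rw [he]; exact le_sup_left
        have : M = N := by rw [← hinf, inf_eq_left.mpr hM']
        exact hM.ne' this
      have hrk := IH (M ⊔ N') hgt M hcov3
      rw [hrk, Ordinal.add_one_eq_succ]
      exact Order.succ_le_of_lt (IsWellFounded.rank_lt_of_rel hgt)
  · rw [Ordinal.add_one_eq_succ]
    exact Order.succ_le_of_lt (IsWellFounded.rank_lt_of_rel (show N' > N from hlt))

theorem rank_top_eq_zero' {X : Type u} [AddCommGroup X] [Module R X] [IsNoetherian R X] :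
    IsWellFounded.rank (α := Submodule R X) (· > ·) ⊤ = 0 := by
  rw [IsWellFounded.rank_eq]
  have : IsEmpty {b : Submodule R X // b > ⊤} := ⟨fun b => not_top_lt b.2⟩
  exact (ciSup_of_empty _).trans rfl

theorem olength_of_subsingleton {X : Type u} [AddCommGroup X] [Module R X] [Subsingleton X] :
    olength R X = 0 := by
  have : IsNoetherian R X := inferInstance
  rw [olength_eq_rank_bot]
  have h : (⊥ : Submodule R X) = ⊤ := Subsingleton.elim _ _
  rw [h, rank_top_eq_zero']
theorem ML {R : Type u} [CommRing R] {F : Type u} [AddCommGroup F] [Module R F]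
    (hF : IsFiniteLength R F) :
    ∀ (X : Type u) [AddCommGroup X] [Module R X] [IsNoetherian R X] (K : Submodule R X),
      (↥K ≃ₗ[R] F) →
      IsWellFounded.rank (α := Submodule R X) (· > ·) ⊥
        = IsWellFounded.rank (α := Submodule R X) (· > ·) K + olength R F := by
  induction hF with
  | of_subsingleton =>
    rename_i G instG1 instG2 instG3
    intro X _ _ _ K e
    haveI hsub : Subsingleton ↥K := e.toEquiv.subsingleton
    have hKbot : K = ⊥ := by
      rw [eq_bot_iff]
      intro x hx
      have h0 : (⟨x, hx⟩ : ↥K) = 0 := Subsingleton.elim _ _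
      simpa [Submodule.mem_bot] using congrArg Subtype.val h0
    rw [hKbot, olength_of_subsingleton, add_zero]
  | of_simple_quotient hF' ih =>
    rename_i G instG1 instG2 F' instS
    intro X _ _ _ K e
    have hFL : IsFiniteLength R G := .of_simple_quotient hF'
    have hNoethG : IsNoetherian R G := (isFiniteLength_iff_isNoetherian_isArtinian.mp hFL).1
    -- transport F' into K
    set F'' : Submodule R ↥K := F'.map (e.symm : G →ₗ[R] ↥K) with hF''def
    have eF'' : ↥F'' ≃ₗ[R] ↥F' := (e.symm.submoduleMap F').symm
    have hmapF'' : F''.map (e : ↥K →ₗ[R] G) = F' := by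
      rw [hF''def, ← Submodule.map_comp]
      have : (e : ↥K →ₗ[R] G) ∘ₗ (e.symm : G →ₗ[R] ↥K) = LinearMap.id := by
        ext z; simp
      rw [this, Submodule.map_id]
    have hsimple : IsSimpleModule R (↥K ⧸ F'') :=
      IsSimpleModule.congr (Submodule.Quotient.equiv F'' F' e hmapF'')
    have hco : IsCoatom F'' := isSimpleModule_iff_isCoatom.mp hsimple
    set K' : Submodule R X := F''.map K.subtype with hK'def
    have hK'le : K' ≤ K := Submodule.map_subtype_le _ _
    have hcomapK' : Submodule.comap K.subtype K' = F'' := by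
      rw [hK'def, Submodule.comap_map_eq, Submodule.ker_subtype, sup_bot_eq]
    have eK' : ↥K' ≃ₗ[R] ↥F' :=
      ((Submodule.equivMapOfInjective K.subtype (Submodule.injective_subtype K) F'').symm).trans
        eF''
    -- K' ⋖ K
    have hcov : K' ⋖ K := by
      constructor
      · refine lt_of_le_of_ne hK'le fun he => ?_
        apply hco.1
        rw [← hcomapK', he, Submodule.comap_subtype_self]
      · intro S hS1 hS2
        have hSle : S ≤ K := hS2.le
        have hF''le : F'' ≤ Submodule.comap K.subtype S := by
          rw [← hcomapK']; exact Submodule.comap_mono hS1.le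
        have hmapS : Submodule.map K.subtype (Submodule.comap K.subtype S) = S := by
          rw [Submodule.map_comap_subtype, inf_eq_right.mpr hSle]
        have hne : F'' ≠ Submodule.comap K.subtype S := by
          intro he
          apply hS1.ne
          rw [hK'def, he, hmapS]
        have := hco.2 _ (lt_of_le_of_ne hF''le hne)
        apply hS2.ne
        rw [← hmapS, this, Submodule.map_subtype_top]
    -- rank equation in X
    have h1 := ih X K' eK'
    have h2 := rank_of_covBy K K' hcov
    -- olength F = 1 + olength F'
    have h3 := ih G F' (LinearEquiv.refl R ↥F')
    have h4 : IsWellFounded.rank (α := Submodule R G) (· > ·) F'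
        = IsWellFounded.rank (α := Submodule R G) (· > ·) ⊤ + 1 := by
      refine rank_of_covBy ⊤ F' ?_
      exact (isSimpleModule_iff_isCoatom.mp ‹IsSimpleModule R (G ⧸ F')›).covBy_top
    have h5 : olength R G = 1 + olength R ↥F' := by
      rw [olength_eq_rank_bot, h3, h4, rank_top_eq_zero', zero_add]
    rw [h1, h2, h5, add_assoc]
theorem fl_of_le {R : Type*} [Ring R] {W : Type*} [AddCommGroup W] [Module R W]
    {S T : Submodule R W} (h : S ≤ T) (hT : IsFiniteLength R ↥T) : IsFiniteLength R ↥S := by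
  obtain ⟨h1, h2⟩ := isFiniteLength_iff_isNoetherian_isArtinian.mp hT
  refine isFiniteLength_iff_isNoetherian_isArtinian.mpr ⟨?_, ?_⟩
  · exact isNoetherian_of_le (ht := h1) h
  · haveI := h2; exact isArtinian_of_le h

theorem fl_map {R : Type*} [CommRing R] {W W' : Type*} [AddCommGroup W] [Module R W]
    [AddCommGroup W'] [Module R W'] (h : W →ₗ[R] W') {S : Submodule R W}
    (hS : IsFiniteLength R ↥S) : IsFiniteLength R ↥(S.map h) := by
  obtain ⟨h1, h2⟩ := isFiniteLength_iff_isNoetherian_isArtinian.mp hS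
  haveI := h1; haveI := h2
  let φ : ↥S →ₗ[R] ↥(S.map h) := h.restrict fun x hx => Submodule.mem_map_of_mem hx
  have hφ : Function.Surjective φ := by
    rintro ⟨y, hy⟩
    obtain ⟨x, hx, hxy⟩ := Submodule.mem_map.mp hy
    exact ⟨⟨x, hx⟩, Subtype.ext (by simpa [φ, LinearMap.restrict_apply] using hxy)⟩
  exact isFiniteLength_iff_isNoetherian_isArtinian.mpr
    ⟨isNoetherian_of_surjective φ (LinearMap.range_eq_top.mpr hφ),
     isArtinian_of_surjective _ φ hφ⟩
theorem main_abstract {R : Type u} [CommRing R]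
    {Kp Mp Np : Type u} [AddCommGroup Kp] [Module R Kp] [AddCommGroup Mp] [Module R Mp]
    [AddCommGroup Np] [Module R Np] [IsNoetherian R Mp] [IsNoetherian R Np]
    (f' : Kp →ₗ[R] Mp) (g' : Mp →ₗ[R] Np)
    (hinj : Function.Injective f') (hexact : Function.Exact f' g')
    (hsurj : Function.Surjective g')
    (hK : IsFiniteLength R Kp)
    (ΛM : Submodule R Mp) (hΛM : ∀ x, x ∈ ΛM ↔ IsFiniteLength R ↥(Submodule.span R {x}))
    (ΛN : Submodule R Np) (hΛN : ∀ x, x ∈ ΛN ↔ IsFiniteLength R ↥(Submodule.span R {x})) :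
    (∀ x, f' x ∈ ΛM) ∧ (∀ x ∈ ΛM, g' x ∈ ΛN) ∧
    (∀ y ∈ ΛN, ∃ x ∈ ΛM, g' x = y) ∧
    olength R ↥ΛM = olength R ↥ΛN + olength R Kp := by
  have hKfl' : IsFiniteLength R ↥(LinearMap.range f') :=
    (LinearEquiv.ofInjective f' hinj).isFiniteLength hK
  have claim2 : ∀ x, f' x ∈ ΛM := by
    intro x
    rw [hΛM]
    refine fl_of_le ?_ hKfl'
    rw [Submodule.span_le]
    exact Set.singleton_subset_iff.mpr ⟨x, rfl⟩
  have claim3 : ∀ x ∈ ΛM, g' x ∈ ΛN := by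
    intro x hx
    rw [hΛN]
    have h1 : Submodule.span R {g' x} = (Submodule.span R {x}).map g' := by
      rw [Submodule.map_span, Set.image_singleton]
    rw [h1]
    exact fl_map g' ((hΛM x).mp hx)
  have claim5 : ∀ y ∈ ΛN, ∃ x ∈ ΛM, g' x = y := by
    intro y hy
    obtain ⟨x, rfl⟩ := hsurj y
    refine ⟨x, ?_, rfl⟩
    rw [hΛM]
    set S := Submodule.span R {x} with hSdef
    let φ : ↥S →ₗ[R] ↥(S.map g') :=
      g'.restrict fun z hz => Submodule.mem_map_of_mem hz
    have hmapS : S.map g' = Submodule.span R {g' x} := by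
      rw [hSdef, Submodule.map_span, Set.image_singleton]
    have htargetFL : IsFiniteLength R ↥(S.map g') := by
      rw [hmapS]; exact (hΛN _).mp hy
    haveI hart1 : IsArtinian R ↥(S.map g') :=
      (isFiniteLength_iff_isNoetherian_isArtinian.mp htargetFL).2
    have hkerle : (LinearMap.ker φ).map S.subtype ≤ LinearMap.range f' := by
      intro z hz
      obtain ⟨w, hw, rfl⟩ := Submodule.mem_map.mp hz
      have h2 := congrArg Subtype.val (LinearMap.mem_ker.mp hw)
      have h0 : g' (w : Mp) = 0 := by
        simpa [φ, LinearMap.restrict_apply] using h2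
      exact (hexact _).mp h0
    haveI hkerArt : IsArtinian R ↥(LinearMap.ker φ) := by
      have hfl : IsFiniteLength R ↥((LinearMap.ker φ).map S.subtype) := fl_of_le hkerle hKfl'
      have e : ↥(LinearMap.ker φ) ≃ₗ[R] ↥((LinearMap.ker φ).map S.subtype) :=
        Submodule.equivMapOfInjective S.subtype (Submodule.injective_subtype S)
          (LinearMap.ker φ)
      exact (isFiniteLength_iff_isNoetherian_isArtinian.mp (e.symm.isFiniteLength hfl)).2
    haveI : IsArtinian R ↥S :=
      isArtinian_of_range_eq_ker (LinearMap.ker φ).subtype φ (Submodule.range_subtype _)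
    exact isFiniteLength_iff_isNoetherian_isArtinian.mpr ⟨inferInstance, inferInstance⟩
  have hrangele : LinearMap.range f' ≤ ΛM := by
    rintro y ⟨k, rfl⟩
    exact claim2 k
  set K₀ : Submodule R ↥ΛM := (LinearMap.range f').comap ΛM.subtype with hK₀def
  have hmapK₀ : K₀.map ΛM.subtype = LinearMap.range f' := by
    rw [hK₀def, Submodule.map_comap_subtype, inf_eq_right.mpr hrangele]
  let e1 : ↥K₀ ≃ₗ[R] Kp :=
    ((Submodule.equivMapOfInjective ΛM.subtype (Submodule.injective_subtype ΛM) K₀).trans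
      (LinearEquiv.ofEq _ _ hmapK₀)).trans (LinearEquiv.ofInjective f' hinj).symm
  let ψ : ↥ΛM →ₗ[R] ↥ΛN := g'.restrict fun z hz => claim3 z hz
  have hψsurj : Function.Surjective ψ := by
    rintro ⟨y, hy⟩
    obtain ⟨x, hxΛ, hxy⟩ := claim5 y hy
    exact ⟨⟨x, hxΛ⟩, Subtype.ext (by simpa [ψ, LinearMap.restrict_apply] using hxy)⟩
  have hψker : LinearMap.ker ψ = K₀ := by
    ext z
    rw [LinearMap.mem_ker, hK₀def, Submodule.mem_comap]
    constructor
    · intro h0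
      have h2 := congrArg Subtype.val h0
      have h1 : g' (z : Mp) = 0 := by
        simpa [ψ, LinearMap.restrict_apply] using h2
      exact (hexact _).mp h1
    · intro h0
      refine Subtype.ext ?_
      have h1 : g' (z : Mp) = 0 := (hexact _).mpr h0
      simpa [ψ, LinearMap.restrict_apply] using h1
  let e2 : (↥ΛM ⧸ K₀) ≃ₗ[R] ↥ΛN :=
    (Submodule.quotEquivOfEq _ _ hψker.symm).trans (ψ.quotKerEquivOfSurjective hψsurj)
  refine ⟨claim2, claim3, claim5, ?_⟩
  calc olength R ↥ΛM
      = IsWellFounded.rank (α := Submodule R ↥ΛM) (· > ·) ⊥ := olength_eq_rank_bot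
    _ = IsWellFounded.rank (α := Submodule R ↥ΛM) (· > ·) K₀ + olength R Kp :=
        ML hK ↥ΛM K₀ e1
    _ = olength R (↥ΛM ⧸ K₀) + olength R Kp := by rw [rank_eq_olength_quotient]
    _ = olength R ↥ΛN + olength R Kp := by rw [olength_congr e2]
set_option maxHeartbeats 1000000
set_option synthInstance.maxHeartbeats 400000

/-- Given a short exact sequence `0 → K → M → N → 0` of finitely generated modules over a
Noetherian ring such that `K ⊗ A_𝒫` has finite length, the induced sequence
`0 → K ⊗ A_𝒫 → Λ(M ⊗ A_𝒫) → Λ(N ⊗ A_𝒫) → 0` is exact, and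
`ℓ(Λ(M ⊗ A_𝒫)) = ℓ(Λ(N ⊗ A_𝒫)) + ℓ(K ⊗ A_𝒫)`. -/
theorem lambda_exact_and_length_additive
    (A : Type u) [CommRing A] [IsNoetherianRing A]
    (K M N : Type u) [AddCommGroup K] [Module A K] [AddCommGroup M] [Module A M]
    [AddCommGroup N] [Module A N]
    [Module.Finite A K] [Module.Finite A M] [Module.Finite A N]
    (f : K →ₗ[A] M) (g : M →ₗ[A] N)
    (hf : Function.Injective f) (hg : Function.Surjective g)
    (hfg : Function.Exact f g)
    (P : Ideal A) [P.IsPrime]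
    (hK : IsFiniteLength (Localization.AtPrime P) (LocalizedModule P.primeCompl K))
    (ΛM : Submodule (Localization.AtPrime P) (LocalizedModule P.primeCompl M))
    (hΛM : ∀ x, x ∈ ΛM ↔ IsFiniteLength (Localization.AtPrime P)
        ↥(Submodule.span (Localization.AtPrime P) {x}))
    (ΛN : Submodule (Localization.AtPrime P) (LocalizedModule P.primeCompl N))
    (hΛN : ∀ x, x ∈ ΛN ↔ IsFiniteLength (Localization.AtPrime P)
        ↥(Submodule.span (Localization.AtPrime P) {x})) :
    Function.Injective (LocalizedModule.map P.primeCompl f) ∧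
    (∀ x, LocalizedModule.map P.primeCompl f x ∈ ΛM) ∧
    (∀ x ∈ ΛM, LocalizedModule.map P.primeCompl g x ∈ ΛN) ∧
    (∀ x ∈ ΛM, (LocalizedModule.map P.primeCompl g x = 0 ↔
      x ∈ Set.range (LocalizedModule.map P.primeCompl f))) ∧
    (∀ y ∈ ΛN, ∃ x ∈ ΛM, LocalizedModule.map P.primeCompl g x = y) ∧
    olength (Localization.AtPrime P) ↥ΛM =
      olength (Localization.AtPrime P) ↥ΛN +
        olength (Localization.AtPrime P) (LocalizedModule P.primeCompl K) := by
  haveI hNR : IsNoetherianRing (Localization.AtPrime P) :=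
    IsLocalization.isNoetherianRing P.primeCompl (Localization.AtPrime P) inferInstance
  haveI : Module.Finite (Localization.AtPrime P) (LocalizedModule P.primeCompl M) :=
    Module.Finite.of_isLocalizedModule P.primeCompl (LocalizedModule.mkLinearMap P.primeCompl M)
  haveI : Module.Finite (Localization.AtPrime P) (LocalizedModule P.primeCompl N) :=
    Module.Finite.of_isLocalizedModule P.primeCompl (LocalizedModule.mkLinearMap P.primeCompl N)
  haveI : IsNoetherian (Localization.AtPrime P) (LocalizedModule P.primeCompl M) :=
    isNoetherian_of_isNoetherianRing_of_finite _ _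
  haveI : IsNoetherian (Localization.AtPrime P) (LocalizedModule P.primeCompl N) :=
    isNoetherian_of_isNoetherianRing_of_finite _ _
  obtain ⟨f', hf'def⟩ : ∃ f'', f'' = LocalizedModule.map P.primeCompl f := ⟨_, rfl⟩
  obtain ⟨g', hg'def⟩ : ∃ g'', g'' = LocalizedModule.map P.primeCompl g := ⟨_, rfl⟩
  rw [← hf'def, ← hg'def]
  have hinj : Function.Injective f' := hf'def ▸ LocalizedModule.map_injective P.primeCompl f hf
  have hsurj : Function.Surjective g' := hg'def ▸ LocalizedModule.map_surjective P.primeCompl g hg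
  have hexact : Function.Exact f' g' := hf'def ▸ hg'def ▸
    IsLocalizedModule.map_exact P.primeCompl
      (LocalizedModule.mkLinearMap P.primeCompl K) (LocalizedModule.mkLinearMap P.primeCompl M)
      (LocalizedModule.mkLinearMap P.primeCompl N) f g hfg
  obtain ⟨c2, c3, c5, c6⟩ := main_abstract f' g' hinj hexact hsurj hK ΛM hΛM ΛN hΛN
  exact ⟨hinj, c2, c3, fun x _ => hexact x, c5, c6⟩
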